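/- Let H be a complex Hilbert space and let ψ, φ ∈ H be unit vectors such that r := ⟨ψ, φ⟩ is real with 0 < r < 1. Set E = ½|ψ⟩⟨ψ| and F = ½|φ⟩⟨φ|. Then E + F ≤ 1, but the Jordan product E ∘ F = (r/8)(|ψ⟩⟨φ| + |φ⟩⟨ψ|) is not a positive operator. -/

import Mathlib

set_option synthInstance.maxHeartbeats 1000000
set_option maxHeartbeats 1000000

open scoped InnerProductSpace

variable {H : Type*} [NormedAddCommGroup H] [InnerProductSpace ℂ H] [CompleteSpace H]

/-- The Jordan product E ∘ F = ½(EF + FE). -/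
noncomputable def jordan (E F : H →L[ℂ] H) : H →L[ℂ] H := (2 : ℂ)⁻¹ • (E * F + F * E)

/-- The rank-one operator |u⟩⟨v| : x ↦ ⟨v, x⟩ u. -/
noncomputable def rankOne (u v : H) : H →L[ℂ] H := (innerSL ℂ v).smulRight u

lemma rankOne_apply (u v x : H) : rankOne u v x = (inner ℂ v x : ℂ) • u := rfl

/-- For unit vectors ψ, φ with real inner product r, 0 < r < 1, the effects E = ½|ψ⟩⟨ψ| and
F = ½|φ⟩⟨φ| satisfy E + F ≤ 1, but their Jordan product E ∘ F = (r/8)(|ψ⟩⟨φ| + |φ⟩⟨ψ|)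
is not a positive operator. -/
theorem jordan_not_nonneg_example (ψ φ : H) (hψ : ‖ψ‖ = 1) (hφ : ‖φ‖ = 1)
    (r : ℝ) (hr : inner ℂ ψ φ = (r : ℂ)) (hr₀ : 0 < r) (hr₁ : r < 1) :
    (2 : ℂ)⁻¹ • rankOne ψ ψ + (2 : ℂ)⁻¹ • rankOne φ φ ≤ 1 ∧
    jordan ((2 : ℂ)⁻¹ • rankOne ψ ψ) ((2 : ℂ)⁻¹ • rankOne φ φ) =
      ((r : ℂ) / 8) • (rankOne ψ φ + rankOne φ ψ) ∧
    ¬ (0 ≤ jordan ((2 : ℂ)⁻¹ • rankOne ψ ψ) ((2 : ℂ)⁻¹ • rankOne φ φ)) := by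
  have hr' : (inner ℂ φ ψ : ℂ) = (r : ℂ) := by
    rw [← inner_conj_symm, hr]; simp
  have hjordan : jordan ((2 : ℂ)⁻¹ • rankOne ψ ψ) ((2 : ℂ)⁻¹ • rankOne φ φ) =
      ((r : ℂ) / 8) • (rankOne ψ φ + rankOne φ ψ) := by
    ext x
    simp only [jordan, ContinuousLinearMap.smul_apply, ContinuousLinearMap.add_apply,
      ContinuousLinearMap.mul_apply, rankOne_apply, inner_smul_right, hr, hr',
      smul_smul]
    module
  refine ⟨?_, hjordan, ?_⟩
  · rw [ContinuousLinearMap.le_def, ContinuousLinearMap.isPositive_iff_complex]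
    intro x
    have key : ⟪((1 : H →L[ℂ] H) - ((2 : ℂ)⁻¹ • rankOne ψ ψ + (2 : ℂ)⁻¹ • rankOne φ φ)) x, x⟫_ℂ
        = ((‖x‖ ^ 2 - 2⁻¹ * ‖(inner ℂ ψ x : ℂ)‖ ^ 2 - 2⁻¹ * ‖(inner ℂ φ x : ℂ)‖ ^ 2 : ℝ) : ℂ) := by
      simp only [ContinuousLinearMap.sub_apply, ContinuousLinearMap.add_apply,
        ContinuousLinearMap.smul_apply, ContinuousLinearMap.one_apply, rankOne_apply,
        inner_sub_left, inner_add_left, inner_smul_left, inner_smul_right,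
        map_inv₀, map_ofNat]
      rw [inner_self_eq_norm_sq_to_K, RCLike.conj_mul, RCLike.conj_mul]
      push_cast
      ring_nf
      rfl
    constructor
    · rw [key]; norm_cast
    · rw [key]
      simp only [RCLike.re_to_complex, Complex.ofReal_re]
      have h1 : ‖(inner ℂ ψ x : ℂ)‖ ≤ ‖x‖ := by
        simpa [hψ] using norm_inner_le_norm (𝕜 := ℂ) ψ x
      have h2 : ‖(inner ℂ φ x : ℂ)‖ ≤ ‖x‖ := by
        simpa [hφ] using norm_inner_le_norm (𝕜 := ℂ) φ x
      have h1' : ‖(inner ℂ ψ x : ℂ)‖ ^ 2 ≤ ‖x‖ ^ 2 := pow_le_pow_left₀ (norm_nonneg _) h1 2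
      have h2' : ‖(inner ℂ φ x : ℂ)‖ ^ 2 ≤ ‖x‖ ^ 2 := pow_le_pow_left₀ (norm_nonneg _) h2 2
      nlinarith
  · rw [ContinuousLinearMap.nonneg_iff_isPositive, hjordan]
    intro hpos
    have := hpos.inner_nonneg_left (ψ - φ)
    have hiψ : ⟪ψ, ψ⟫_ℂ = 1 := by
      rw [inner_self_eq_norm_sq_to_K, hψ]; norm_num
    have hiφ : ⟪φ, φ⟫_ℂ = 1 := by
      rw [inner_self_eq_norm_sq_to_K, hφ]; norm_num
    have hval : ⟪(((r : ℂ) / 8) • (rankOne ψ φ + rankOne φ ψ)) (ψ - φ), ψ - φ⟫_ℂ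
        = ((-(r * (1 - r) ^ 2 / 4) : ℝ) : ℂ) := by
      simp only [ContinuousLinearMap.smul_apply, ContinuousLinearMap.add_apply, rankOne_apply,
        inner_sub_left, inner_sub_right, inner_add_left, inner_smul_left, inner_smul_right,
        hr, hr', hiψ, hiφ, map_mul, map_one, map_sub, map_neg, map_add, map_div₀,
        map_ofNat, Complex.conj_ofReal]
      push_cast
      ring
    rw [hval] at this
    simp only [Complex.zero_le_real] at this
    have hq : 0 < (1 - r) ^ 2 := pow_pos (by linarith) 2
    nlinarith [mul_pos hr₀ hq]
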